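/- Let a, b, c ≥ 1 be integers with gcd(a,b) = 1, let l be a prime dividing b, let α ∈ {1, −1}, let μ ∈ ℤ with gcd(μ, 2abc²) = 1, and let d be an integer with d ≡ μ² (mod 4a²bc²). Let p, q ∈ ℤ satisfy p² − d·q² = 4αac. Then 2a²c²·l divides (2ac + α·d·q²) − μ·(α·p·q) if and only if 2ac·l divides p − μq. -/
import Mathlib


/-- equivalence (3.1.49) ⇔ (3.1.52) in the proof of Theorem 3.1.4.
Let `a, b, c ≥ 1` with `gcd(a,b) = 1`, let `l` be a prime dividing `b`, `α = ±1`,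
`μ` with `gcd(μ, 2abc²) = 1`, and `d ≡ μ² (mod 4a²bc²)`.  If `p² − dq² = 4αac`, then
`2a²c²·l ∣ (2ac + αdq²) − μ·αpq` if and only if `2ac·l ∣ p − μq`. -/
theorem a_series_congruence_prime_iff
    (a b c : ℤ) (ha : 1 ≤ a) (hb : 1 ≤ b) (hc : 1 ≤ c)
    (hab : Int.gcd a b = 1)
    (l : ℤ) (hl : Prime l) (hlb : l ∣ b)
    (α : ℤ) (hα : α = 1 ∨ α = -1)
    (μ : ℤ) (hμ : Int.gcd μ (2 * a * b * c ^ 2) = 1)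
    (d : ℤ) (hdμ : (4 * a ^ 2 * b * c ^ 2) ∣ (d - μ ^ 2))
    (p q : ℤ) (hpq : p ^ 2 - d * q ^ 2 = 4 * α * a * c) :
    (2 * a ^ 2 * c ^ 2 * l) ∣ ((2 * a * c + α * d * q ^ 2) - μ * (α * p * q)) ↔
      (2 * a * c * l) ∣ (p - μ * q) := by
  have h2ac : (0:ℤ) < 2 * a * c := by nlinarith
  have h2ac0 : (2 * a * c : ℤ) ≠ 0 := ne_of_gt h2ac
  -- divisibility of the error term
  have hdq : (4 * a ^ 2 * c ^ 2 * l) ∣ (d - μ ^ 2) * q ^ 2 := by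
    obtain ⟨b', rfl⟩ := hlb
    have h1 : (4 * a ^ 2 * c ^ 2 * l) ∣ (4 * a ^ 2 * (l * b') * c ^ 2) := ⟨b', by ring⟩
    exact (h1.trans hdμ).mul_right _
  -- the key exact identity
  have key : 2 * ((2 * a * c + α * d * q ^ 2) - μ * (α * p * q)) =
      α * ((p - μ * q) ^ 2 + (d - μ ^ 2) * q ^ 2) := by
    rcases hα with rfl | rfl
    · linear_combination -hpq
    · linear_combination hpq
  constructor
  · intro h
    have hX2 : (4 * a ^ 2 * c ^ 2 * l) ∣
        2 * ((2 * a * c + α * d * q ^ 2) - μ * (α * p * q)) := by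
      obtain ⟨t, ht⟩ := h
      exact ⟨t, by rw [ht]; ring⟩
    rw [key] at hX2
    have hsum : (4 * a ^ 2 * c ^ 2 * l) ∣ ((p - μ * q) ^ 2 + (d - μ ^ 2) * q ^ 2) := by
      rcases hα with rfl | rfl
      · simpa using hX2
      · rw [show (-1 : ℤ) * ((p - μ * q) ^ 2 + (d - μ ^ 2) * q ^ 2) =
            -(((p - μ * q) ^ 2 + (d - μ ^ 2) * q ^ 2)) by ring, dvd_neg] at hX2
        exact hX2
    have hsq : (4 * a ^ 2 * c ^ 2 * l) ∣ (p - μ * q) ^ 2 := by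
      have := dvd_sub hsum hdq
      simpa using this
    have hpow : (2 * a * c) ^ 2 ∣ (p - μ * q) ^ 2 :=
      dvd_trans ⟨l, by ring⟩ hsq
    have h1 : (2 * a * c) ∣ (p - μ * q) :=
      (Int.pow_dvd_pow_iff two_ne_zero).mp hpow
    obtain ⟨s, hs⟩ := h1
    have hls : l ∣ s := by
      have h2 : (4 * a ^ 2 * c ^ 2 * l) ∣ (4 * a ^ 2 * c ^ 2) * s ^ 2 := by
        rw [show (4 * a ^ 2 * c ^ 2) * s ^ 2 = (p - μ * q) ^ 2 by rw [hs]; ring]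
        exact hsq
      obtain ⟨t, ht⟩ := h2
      have h4 : (4 * a ^ 2 * c ^ 2 : ℤ) ≠ 0 := by positivity
      have : s ^ 2 = l * t := by
        apply mul_left_cancel₀ h4
        rw [ht]; ring
      exact hl.dvd_of_dvd_pow (n := 2) ⟨t, this⟩
    obtain ⟨t, rfl⟩ := hls
    exact ⟨t, by rw [hs]; ring⟩
  · rintro ⟨t, ht⟩
    have h2X : 2 * (2 * a ^ 2 * c ^ 2 * l) ∣
        2 * ((2 * a * c + α * d * q ^ 2) - μ * (α * p * q)) := by
      rw [key]
      have hn2 : (4 * a ^ 2 * c ^ 2 * l) ∣ (p - μ * q) ^ 2 := by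
        exact ⟨l * t ^ 2, by rw [ht]; ring⟩
      have := dvd_add hn2 hdq
      rw [show (2:ℤ) * (2 * a ^ 2 * c ^ 2 * l) = 4 * a ^ 2 * c ^ 2 * l by ring]
      rcases hα with rfl | rfl
      · simpa using this
      · rw [show (-1 : ℤ) * ((p - μ * q) ^ 2 + (d - μ ^ 2) * q ^ 2) =
            -(((p - μ * q) ^ 2 + (d - μ ^ 2) * q ^ 2)) by ring]
        exact dvd_neg.mpr this
    exact (mul_dvd_mul_iff_left (two_ne_zero (α := ℤ))).mp h2X
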